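/- Let T : Σ → Σ be a two-sided subshift of finite type with metric d_ω(x,y) = ω^k where k is the largest integer with x_i = y_i for all |i| < k (ω ∈ (0,1)). Let A : Σ → GL(k,ℝ) be r-Hölder and fiber bunched: ‖A(x)‖·‖A(x)⁻¹‖·ω^r < 1 for all x. Then for every x ∈ Σ and y in the local stable set of x, the limit H^s_{y←x} := lim_{n→∞} A^n(y)⁻¹·A^n(x) exists in GL(k,ℝ), and satisfies A(x)·H^s_{x←y} = H^s_{T(x)←T(y)}·A(y). -/
import Mathlib


open Filter

/-- The left shift on the two-sided full shift. -/
def shiftMap {q : ℕ} (x : ℤ → Fin q) : ℤ → Fin q := fun i => x (i + 1)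

/-- The matrix cocycle product `A^n(x) = A(T^{n-1}x)⋯A(Tx)A(x)` over the shift. -/
noncomputable def shiftCocycle {q k : ℕ}
    (A : (ℤ → Fin q) → (EuclideanSpace ℝ (Fin k) →L[ℝ] EuclideanSpace ℝ (Fin k))) :
    ℕ → (ℤ → Fin q) → (EuclideanSpace ℝ (Fin k) →L[ℝ] EuclideanSpace ℝ (Fin k))
  | 0, _ => 1
  | n + 1, x => shiftCocycle A n (shiftMap x) ∘L A x

/-- The inverse cocycle `(A^n(x))⁻¹ = A(x)⁻¹ A(Tx)⁻¹ ⋯ A(T^{n-1}x)⁻¹`, built from a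
pointwise inverse `B` of `A`. -/
noncomputable def shiftCocycleInv {q k : ℕ}
    (B : (ℤ → Fin q) → (EuclideanSpace ℝ (Fin k) →L[ℝ] EuclideanSpace ℝ (Fin k))) :
    ℕ → (ℤ → Fin q) → (EuclideanSpace ℝ (Fin k) →L[ℝ] EuclideanSpace ℝ (Fin k))
  | 0, _ => 1
  | n + 1, x => B x ∘L shiftCocycleInv B n (shiftMap x)

variable {q k : ℕ}

lemma shiftMap_iterate_apply (x : ℤ → Fin q) : ∀ n : ℕ, ∀ i : ℤ, shiftMap^[n] x i = x (i + n) := by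
  intro n
  induction n generalizing x with
  | zero => simp
  | succ n ih =>
    intro i
    rw [Function.iterate_succ_apply, ih (shiftMap x) i]
    show x (i + n + 1) = _
    congr 1
    push_cast
    ring

lemma shiftCocycle_succ' (A : (ℤ → Fin q) → (EuclideanSpace ℝ (Fin k) →L[ℝ] EuclideanSpace ℝ (Fin k)))
    (n : ℕ) (x : ℤ → Fin q) :
    shiftCocycle A (n + 1) x = A (shiftMap^[n] x) ∘L shiftCocycle A n x := by
  induction n generalizing x with
  | zero => simp [shiftCocycle, ContinuousLinearMap.one_def]
  | succ n ih =>
    show shiftCocycle A (n+1) (shiftMap x) ∘L A x = _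
    rw [ih (shiftMap x), ContinuousLinearMap.comp_assoc, ← Function.iterate_succ_apply]
    rfl

lemma shiftCocycleInv_succ' (B : (ℤ → Fin q) → (EuclideanSpace ℝ (Fin k) →L[ℝ] EuclideanSpace ℝ (Fin k)))
    (n : ℕ) (x : ℤ → Fin q) :
    shiftCocycleInv B (n + 1) x = shiftCocycleInv B n x ∘L B (shiftMap^[n] x) := by
  induction n generalizing x with
  | zero => simp [shiftCocycleInv, ContinuousLinearMap.one_def]
  | succ n ih =>
    show B x ∘L shiftCocycleInv B (n+1) (shiftMap x) = _
    rw [ih (shiftMap x), ← ContinuousLinearMap.comp_assoc, ← Function.iterate_succ_apply]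
    rfl

lemma norm_shiftCocycle_le (A : (ℤ → Fin q) → (EuclideanSpace ℝ (Fin k) →L[ℝ] EuclideanSpace ℝ (Fin k)))
    (n : ℕ) (x : ℤ → Fin q) :
    ‖shiftCocycle A n x‖ ≤ ∏ j ∈ Finset.range n, ‖A (shiftMap^[j] x)‖ := by
  induction n with
  | zero =>
    show ‖(1 : EuclideanSpace ℝ (Fin k) →L[ℝ] EuclideanSpace ℝ (Fin k))‖ ≤ 1
    rw [ContinuousLinearMap.one_def]
    exact ContinuousLinearMap.norm_id_le
  | succ n ih =>
    rw [shiftCocycle_succ', Finset.prod_range_succ, mul_comm]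
    calc ‖A (shiftMap^[n] x) ∘L shiftCocycle A n x‖
        ≤ ‖A (shiftMap^[n] x)‖ * ‖shiftCocycle A n x‖ := ContinuousLinearMap.opNorm_comp_le _ _
      _ ≤ ‖A (shiftMap^[n] x)‖ * ∏ j ∈ Finset.range n, ‖A (shiftMap^[j] x)‖ := by
          gcongr
      _ = _ := by ring

lemma norm_shiftCocycleInv_le (B : (ℤ → Fin q) → (EuclideanSpace ℝ (Fin k) →L[ℝ] EuclideanSpace ℝ (Fin k)))
    (n : ℕ) (x : ℤ → Fin q) :
    ‖shiftCocycleInv B n x‖ ≤ ∏ j ∈ Finset.range n, ‖B (shiftMap^[j] x)‖ := by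
  induction n with
  | zero =>
    show ‖(1 : EuclideanSpace ℝ (Fin k) →L[ℝ] EuclideanSpace ℝ (Fin k))‖ ≤ 1
    rw [ContinuousLinearMap.one_def]
    exact ContinuousLinearMap.norm_id_le
  | succ n ih =>
    rw [shiftCocycleInv_succ', Finset.prod_range_succ]
    calc ‖shiftCocycleInv B n x ∘L B (shiftMap^[n] x)‖
        ≤ ‖shiftCocycleInv B n x‖ * ‖B (shiftMap^[n] x)‖ := ContinuousLinearMap.opNorm_comp_le _ _
      _ ≤ _ := by gcongr

lemma rpow_pow_comm {ω r : ℝ} (hω : 0 ≤ ω) (m : ℕ) : ((ω ^ m : ℝ)) ^ r = (ω ^ r) ^ m := by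
  rw [← Real.rpow_natCast ω m, ← Real.rpow_natCast (ω ^ r) m, ← Real.rpow_mul hω,
    ← Real.rpow_mul hω, mul_comm]

variable {q k : ℕ}

lemma sig_isCompact (Q : Fin q → Fin q → Prop) :
    IsCompact {x : ℤ → Fin q | ∀ i : ℤ, Q (x i) (x (i + 1))} := by
  have hcl : IsClosed {x : ℤ → Fin q | ∀ i : ℤ, Q (x i) (x (i + 1))} := by
    have : {x : ℤ → Fin q | ∀ i : ℤ, Q (x i) (x (i + 1))} =
        ⋂ i : ℤ, (fun x : ℤ → Fin q => (x i, x (i + 1))) ⁻¹' {p | Q p.1 p.2} := by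
      ext x; simp
    rw [this]
    exact isClosed_iInter fun i =>
      (isClosed_discrete _).preimage ((continuous_apply i).prodMk (continuous_apply (i + 1)))
  exact hcl.isCompact

lemma holder_continuousOn
    (A : (ℤ → Fin q) → (EuclideanSpace ℝ (Fin k) →L[ℝ] EuclideanSpace ℝ (Fin k)))
    (S : Set (ℤ → Fin q)) (ω r Cst : ℝ) (hω0 : 0 < ω) (hω1 : ω < 1) (hr : 0 < r)
    (hHolder : ∀ x ∈ S, ∀ y ∈ S, ∀ m : ℕ,
      (∀ i : ℤ, |i| < (m : ℤ) → x i = y i) → ‖A x - A y‖ ≤ Cst * (ω ^ m) ^ r) :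
    ContinuousOn A S := by
  have s0 : (0:ℝ) < ω ^ r := Real.rpow_pos_of_pos hω0 r
  have s1 : ω ^ r < 1 := Real.rpow_lt_one hω0.le hω1 hr
  intro z hz
  rw [ContinuousWithinAt]
  rw [Metric.tendsto_nhds]
  intro ε hε
  have htend : Tendsto (fun m : ℕ => Cst * (ω ^ r) ^ m) atTop (nhds (Cst * 0)) :=
    (tendsto_pow_atTop_nhds_zero_of_lt_one s0.le s1).const_mul Cst
  rw [mul_zero] at htend
  obtain ⟨m, hm⟩ := (htend.eventually (gt_mem_nhds hε)).exists
  have hU : {w : ℤ → Fin q | ∀ i ∈ Finset.Ioo (-(m:ℤ)) (m:ℤ), w i = z i} ∈ nhds z := by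
    have : {w : ℤ → Fin q | ∀ i ∈ Finset.Ioo (-(m:ℤ)) (m:ℤ), w i = z i} =
        ⋂ i ∈ Finset.Ioo (-(m:ℤ)) (m:ℤ), {w : ℤ → Fin q | w i = z i} := by
      ext w; simp [Set.mem_iInter]
    rw [this]
    refine (Filter.biInter_finset_mem _).mpr fun i _ => ?_
    have : {w : ℤ → Fin q | w i = z i} = (fun w : ℤ → Fin q => w i) ⁻¹' {z i} := rfl
    rw [this]
    exact (continuous_apply i).continuousAt.preimage_mem_nhds (by simp [nhds_discrete])
  filter_upwards [mem_nhdsWithin_of_mem_nhds hU, self_mem_nhdsWithin] with w hw hwS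
  rw [dist_eq_norm]
  calc ‖A w - A z‖ ≤ Cst * (ω ^ m) ^ r := by
        refine hHolder w hwS z hz m fun i hi => hw i ?_
        rw [Finset.mem_Ioo]
        rw [abs_lt] at hi
        omega
    _ = Cst * (ω ^ r) ^ m := by
        congr 1
        rw [← Real.rpow_natCast ω m, ← Real.rpow_natCast (ω ^ r) m, ← Real.rpow_mul hω0.le,
          ← Real.rpow_mul hω0.le, mul_comm]
    _ < ε := hm

set_option maxHeartbeats 1000000 in
lemma key_tendsto
    (S : Set (ℤ → Fin q)) (hScomp : IsCompact S)
    (hSinv : ∀ z ∈ S, shiftMap z ∈ S)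
    (A B : (ℤ → Fin q) → (EuclideanSpace ℝ (Fin k) →L[ℝ] EuclideanSpace ℝ (Fin k)))
    (hB : ∀ x ∈ S, A x ∘L B x = 1 ∧ B x ∘L A x = 1)
    (ω r Cst : ℝ) (hω0 : 0 < ω) (hω1 : ω < 1) (hr : 0 < r) (hC : 0 < Cst)
    (hHolder : ∀ x ∈ S, ∀ y ∈ S, ∀ m : ℕ,
      (∀ i : ℤ, |i| < (m : ℤ) → x i = y i) → ‖A x - A y‖ ≤ Cst * (ω ^ m) ^ r)
    (hfb : ∀ x ∈ S, ‖A x‖ * ‖B x‖ * ω ^ r < 1)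
    (x : ℤ → Fin q) (hx : x ∈ S) (y : ℤ → Fin q) (hy : y ∈ S)
    (hagree : ∀ n : ℤ, 0 ≤ n → y n = x n) :
    ∃ L, Tendsto (fun n : ℕ => shiftCocycleInv B n x ∘L shiftCocycle A n y)
      atTop (nhds L) := by
  rcases subsingleton_or_nontrivial (EuclideanSpace ℝ (Fin k)) with hsub | hnt
  · have hS : Subsingleton (EuclideanSpace ℝ (Fin k) →L[ℝ] EuclideanSpace ℝ (Fin k)) :=
      ⟨fun f g => ContinuousLinearMap.ext fun v => Subsingleton.elim _ _⟩
    refine ⟨1, ?_⟩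
    have : (fun n : ℕ => shiftCocycleInv B n x ∘L shiftCocycle A n y) = fun _ => 1 :=
      funext fun n => Subsingleton.elim _ _
    rw [this]
    exact tendsto_const_nhds
  · set s := ω ^ r with hs
    clear_value s
    have s0 : (0:ℝ) < s := hs ▸ Real.rpow_pos_of_pos hω0 r
    have s1 : s < 1 := hs ▸ Real.rpow_lt_one hω0.le hω1 hr
    have hmem : ∀ z ∈ S, ∀ j : ℕ, shiftMap^[j] z ∈ S := by
      intro z hz j
      induction j with
      | zero => exact hz
      | succ j ih => rw [Function.iterate_succ_apply']; exact hSinv _ ih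
    have hcA : ContinuousOn A S := holder_continuousOn A S ω r Cst hω0 hω1 hr hHolder
    have hBinv : ∀ z ∈ S, Ring.inverse (A z) = B z := by
      intro z hz
      have h1 : A z * B z = 1 := by
        rw [ContinuousLinearMap.mul_def]; exact (hB z hz).1
      have h2 : B z * A z = 1 := by
        rw [ContinuousLinearMap.mul_def]; exact (hB z hz).2
      exact Ring.inverse_unit ⟨A z, B z, h1, h2⟩
    have hcB : ContinuousOn B S := by
      refine ContinuousOn.congr (f := fun z => Ring.inverse (A z)) ?_
        (fun z hz => (hBinv z hz).symm)
      intro z hz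
      have hu : ContinuousAt Ring.inverse (A z) := by
        have h1 : A z * B z = 1 := by
          rw [ContinuousLinearMap.mul_def]; exact (hB z hz).1
        have h2 : B z * A z = 1 := by
          rw [ContinuousLinearMap.mul_def]; exact (hB z hz).2
        exact NormedRing.inverse_continuousAt ⟨A z, B z, h1, h2⟩
      exact hu.comp_continuousWithinAt (hcA z hz)
    obtain ⟨z0, hz0S, hz0'⟩ := hScomp.exists_isMaxOn ⟨x, hx⟩
      ((hcA.norm.mul hcB.norm).mul continuousOn_const)
    have hz0 : ∀ z ∈ S, ‖A z‖ * ‖B z‖ * s ≤ ‖A z0‖ * ‖B z0‖ * s := fun z hz => hz0' hz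
    set θ := ‖A z0‖ * ‖B z0‖ * s with hθ
    clear_value θ
    have hθ1 : θ < 1 := hθ ▸ hfb z0 hz0S
    have hone : ‖(1 : EuclideanSpace ℝ (Fin k) →L[ℝ] EuclideanSpace ℝ (Fin k))‖ = 1 := by
      rw [ContinuousLinearMap.one_def]; exact ContinuousLinearMap.norm_id
    have hAB1 : ∀ z ∈ S, 1 ≤ ‖A z‖ * ‖B z‖ := by
      intro z hz
      calc (1:ℝ) = ‖(1 : EuclideanSpace ℝ (Fin k) →L[ℝ] EuclideanSpace ℝ (Fin k))‖ := hone.symm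
        _ = ‖A z ∘L B z‖ := by rw [(hB z hz).1]
        _ ≤ ‖A z‖ * ‖B z‖ := ContinuousLinearMap.opNorm_comp_le _ _
    have hθ0 : 0 < θ := by
      have h1 : s ≤ ‖A x‖ * ‖B x‖ * s := by
        nlinarith [hAB1 x hx, s0]
      exact lt_of_lt_of_le s0 (h1.trans (hz0 x hx))
    obtain ⟨z1, hz1S, hz1'⟩ := hScomp.exists_isMaxOn ⟨x, hx⟩ hcB.norm
    have hz1 : ∀ z ∈ S, ‖B z‖ ≤ ‖B z1‖ := fun z hz => hz1' hz
    set CB := ‖B z1‖ with hCB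
    clear_value CB
    have hCB0 : 0 ≤ CB := hCB ▸ norm_nonneg _
    have hdiff : ∀ j : ℕ, ‖A (shiftMap^[j] y) - A (shiftMap^[j] x)‖ ≤ Cst * s ^ j := by
      intro j
      have h := hHolder _ (hmem y hy j) _ (hmem x hx j) j ?_
      · rw [rpow_pow_comm hω0.le] at h; rwa [← hs] at h
      · intro i hi
        rw [shiftMap_iterate_apply, shiftMap_iterate_apply]
        rw [abs_lt] at hi
        exact hagree (i + j) (by omega)
    set c := CB * Cst * s with hc
    clear_value c
    have hc0 : 0 ≤ c := by rw [hc]; positivity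
    have hfac : ∀ j : ℕ, ‖B (shiftMap^[j] x)‖ * ‖A (shiftMap^[j] y)‖ * s
        ≤ θ * Real.exp (c / θ * s ^ j) := by
      intro j
      have hAy : ‖A (shiftMap^[j] y)‖ ≤ ‖A (shiftMap^[j] x)‖ + Cst * s ^ j := by
        have h2 := norm_sub_norm_le (A (shiftMap^[j] y)) (A (shiftMap^[j] x))
        linarith [hdiff j]
      have h3 : ‖B (shiftMap^[j] x)‖ * ‖A (shiftMap^[j] y)‖ * s ≤ θ + c * s ^ j := by
        calc ‖B (shiftMap^[j] x)‖ * ‖A (shiftMap^[j] y)‖ * s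
            ≤ ‖B (shiftMap^[j] x)‖ * (‖A (shiftMap^[j] x)‖ + Cst * s ^ j) * s := by
              gcongr
          _ = ‖A (shiftMap^[j] x)‖ * ‖B (shiftMap^[j] x)‖ * s
              + ‖B (shiftMap^[j] x)‖ * Cst * s ^ j * s := by ring
          _ ≤ θ + CB * Cst * s ^ j * s := by
              have ha := hz0 _ (hmem x hx j)
              have hb := hz1 _ (hmem x hx j)
              have hpos : (0:ℝ) ≤ Cst * s ^ j * s := by positivity
              have := mul_le_mul_of_nonneg_right hb hpos
              have h5 : ‖B (shiftMap^[j] x)‖ * Cst * s ^ j * s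
                  ≤ CB * Cst * s ^ j * s := by nlinarith [hz1 _ (hmem x hx j), hpos]
              linarith [ha]
          _ = θ + c * s ^ j := by rw [hc]; ring
      have h6 : θ + c * s ^ j = θ * (1 + c / θ * s ^ j) := by
        field_simp
      have h7 : 1 + c / θ * s ^ j ≤ Real.exp (c / θ * s ^ j) := by
        linarith [Real.add_one_le_exp (c / θ * s ^ j)]
      calc ‖B (shiftMap^[j] x)‖ * ‖A (shiftMap^[j] y)‖ * s ≤ θ + c * s ^ j := h3
        _ = θ * (1 + c / θ * s ^ j) := h6
        _ ≤ θ * Real.exp (c / θ * s ^ j) := by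
            exact mul_le_mul_of_nonneg_left h7 hθ0.le
    have hsumgeo : ∀ n : ℕ, ∑ j ∈ Finset.range n, s ^ j ≤ (1 - s)⁻¹ := by
      intro n
      have := Summable.sum_le_tsum (Finset.range n) (fun i _ => pow_nonneg s0.le i)
        (summable_geometric_of_lt_one s0.le s1)
      rwa [tsum_geometric_of_lt_one s0.le s1] at this
    have hprod : ∀ n : ℕ, ∏ j ∈ Finset.range n, (‖B (shiftMap^[j] x)‖ * ‖A (shiftMap^[j] y)‖ * s)
        ≤ θ ^ n * Real.exp (c / θ * (1 - s)⁻¹) := by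
      intro n
      calc ∏ j ∈ Finset.range n, (‖B (shiftMap^[j] x)‖ * ‖A (shiftMap^[j] y)‖ * s)
          ≤ ∏ j ∈ Finset.range n, (θ * Real.exp (c / θ * s ^ j)) :=
            Finset.prod_le_prod (fun j _ => by positivity) (fun j _ => hfac j)
        _ = θ ^ n * Real.exp (∑ j ∈ Finset.range n, c / θ * s ^ j) := by
            rw [Finset.prod_mul_distrib, Finset.prod_const, Real.exp_sum, Finset.card_range]
        _ ≤ θ ^ n * Real.exp (c / θ * (1 - s)⁻¹) := by
            have h8 : ∑ j ∈ Finset.range n, c / θ * s ^ j ≤ c / θ * (1 - s)⁻¹ := by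
              rw [← Finset.mul_sum]
              exact mul_le_mul_of_nonneg_left (hsumgeo n) (by positivity)
            exact mul_le_mul_of_nonneg_left (Real.exp_le_exp.mpr h8) (by positivity)
    set K := CB * Cst * Real.exp (c / θ * (1 - s)⁻¹) with hK
    clear_value K
    have hstep : ∀ n : ℕ,
        dist (shiftCocycleInv B n x ∘L shiftCocycle A n y)
          (shiftCocycleInv B (n+1) x ∘L shiftCocycle A (n+1) y) ≤ K * θ ^ n := by
      intro n
      rw [dist_eq_norm']
      have h4 : B (shiftMap^[n] x) * A (shiftMap^[n] x) = 1 := by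
        rw [ContinuousLinearMap.mul_def]; exact (hB _ (hmem x hx n)).2
      rw [shiftCocycleInv_succ', shiftCocycle_succ']
      simp only [← ContinuousLinearMap.mul_def]
      have hPle := norm_shiftCocycleInv_le B n x
      have hCcle := norm_shiftCocycle_le A n y
      set P := shiftCocycleInv B n x with hP
      set Cc := shiftCocycle A n y with hCc
      set b := B (shiftMap^[n] x) with hb
      set a := A (shiftMap^[n] x) with ha
      set a' := A (shiftMap^[n] y) with ha'
      clear_value P Cc b a a'
      have hble : ‖b‖ ≤ CB := hb ▸ hz1 _ (hmem x hx n)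
      have hd : ‖a' - a‖ ≤ Cst * s ^ n := by rw [ha', ha]; exact hdiff n
      have hpr := hprod n
      clear hHolder hfb hz0 hz1 hdiff hsumgeo hfac hAB1 hBinv hcA hcB hScomp hSinv hmem
        hagree hB hone hz0' hz1' hprod hθ hCB hc hs hb ha ha' hP hCc hx hy
      have hterm : P * b * (a' * Cc) - P * Cc = P * (b * (a' - a)) * Cc := by
        have h5 : b * (a' - a) = b * a' - 1 := by rw [mul_sub, h4]
        rw [h5, mul_sub, mul_one, sub_mul, mul_assoc P b, ← mul_assoc b a', ← mul_assoc P (b * a')]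
      rw [hterm]
      have hBprod : (0:ℝ) ≤ ∏ j ∈ Finset.range n, ‖B (shiftMap^[j] x)‖ :=
        Finset.prod_nonneg fun j _ => norm_nonneg _
      have hAprod : (0:ℝ) ≤ ∏ j ∈ Finset.range n, ‖A (shiftMap^[j] y)‖ :=
        Finset.prod_nonneg fun j _ => norm_nonneg _
      calc ‖P * (b * (a' - a)) * Cc‖
          ≤ ‖P * (b * (a' - a))‖ * ‖Cc‖ := norm_mul_le _ _
        _ ≤ (‖P‖ * ‖b * (a' - a)‖) * ‖Cc‖ := by gcongr; exact norm_mul_le _ _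
        _ ≤ (‖P‖ * (‖b‖ * ‖a' - a‖)) * ‖Cc‖ := by gcongr; exact norm_mul_le _ _
        _ = ‖P‖ * ‖b‖ * ‖a' - a‖ * ‖Cc‖ := by ring
        _ ≤ (∏ j ∈ Finset.range n, ‖B (shiftMap^[j] x)‖) * CB * (Cst * s ^ n)
            * (∏ j ∈ Finset.range n, ‖A (shiftMap^[j] y)‖) := by
            gcongr
        _ = CB * Cst * ∏ j ∈ Finset.range n, (‖B (shiftMap^[j] x)‖ * ‖A (shiftMap^[j] y)‖ * s) := by
            rw [Finset.prod_mul_distrib, Finset.prod_mul_distrib, Finset.prod_const,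
              Finset.card_range]
            ring
        _ ≤ CB * Cst * (θ ^ n * Real.exp (c / θ * (1 - s)⁻¹)) :=
            mul_le_mul_of_nonneg_left hpr (by positivity)
        _ = K * θ ^ n := by rw [hK]; ring
    exact cauchySeq_tendsto_of_complete (cauchySeq_of_le_geometric θ K hθ1 hstep)


/-- Existence and equivariance of canonical stable holonomies for fiber bunched Hölder
cocycles over a two-sided subshift of finite type with the metric `d_ω`. -/
theorem stable_holonomy_exists
    {q k : ℕ} (Q : Fin q → Fin q → Prop)
    (Sig : Set (ℤ → Fin q))
    (hSFT : Sig = {x | ∀ i : ℤ, Q (x i) (x (i + 1))})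
    (A B : (ℤ → Fin q) → (EuclideanSpace ℝ (Fin k) →L[ℝ] EuclideanSpace ℝ (Fin k)))
    (hB : ∀ x ∈ Sig, A x ∘L B x = 1 ∧ B x ∘L A x = 1)
    (ω r Cst : ℝ) (hω0 : 0 < ω) (hω1 : ω < 1) (hr : 0 < r) (hC : 0 < Cst)
    -- `A` is `r`-Hölder with respect to `d_ω`: if `x` and `y` agree on `|i| < m`
    -- then `d_ω(x,y) ≤ ω^m`
    (hHolder : ∀ x ∈ Sig, ∀ y ∈ Sig, ∀ m : ℕ,
      (∀ i : ℤ, |i| < (m : ℤ) → x i = y i) → ‖A x - A y‖ ≤ Cst * (ω ^ m) ^ r)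
    -- fiber bunching
    (hfb : ∀ x ∈ Sig, ‖A x‖ * ‖B x‖ * ω ^ r < 1) :
    ∃ H : (ℤ → Fin q) → (ℤ → Fin q) →
        (EuclideanSpace ℝ (Fin k) →L[ℝ] EuclideanSpace ℝ (Fin k)),
      (∀ x ∈ Sig, ∀ y ∈ Sig, (∀ n : ℤ, 0 ≤ n → y n = x n) →
        Tendsto (fun n : ℕ => shiftCocycleInv B n x ∘L shiftCocycle A n y)
          atTop (nhds (H x y))) ∧
      (∀ x ∈ Sig, ∀ y ∈ Sig, (∀ n : ℤ, 0 ≤ n → y n = x n) →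
        A x ∘L H x y = H (shiftMap x) (shiftMap y) ∘L A y) := by
  classical
  have hScomp : IsCompact Sig := by rw [hSFT]; exact sig_isCompact Q
  have hSinv : ∀ z ∈ Sig, shiftMap z ∈ Sig := by
    rw [hSFT]
    intro z hz i
    exact hz (i + 1)
  have key : ∀ x ∈ Sig, ∀ y ∈ Sig, (∀ n : ℤ, 0 ≤ n → y n = x n) →
      ∃ L, Tendsto (fun n : ℕ => shiftCocycleInv B n x ∘L shiftCocycle A n y)
        atTop (nhds L) := fun x hx y hy hagr =>
    key_tendsto Sig hScomp hSinv A B hB ω r Cst hω0 hω1 hr hC hHolder hfb x hx y hy hagr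
  refine ⟨fun x y => limUnder atTop (fun n : ℕ => shiftCocycleInv B n x ∘L shiftCocycle A n y),
    ?_, ?_⟩
  · intro x hx y hy hagr
    obtain ⟨L, hL⟩ := key x hx y hy hagr
    beta_reduce
    rwa [hL.limUnder_eq]
  · intro x hx y hy hagr
    have hx' : shiftMap x ∈ Sig := hSinv x hx
    have hy' : shiftMap y ∈ Sig := hSinv y hy
    have hagr' : ∀ n : ℤ, 0 ≤ n → shiftMap y n = shiftMap x n := fun n hn =>
      hagr (n + 1) (by omega)
    obtain ⟨L, hL⟩ := key x hx y hy hagr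
    obtain ⟨L', hL'⟩ := key _ hx' _ hy' hagr'
    beta_reduce
    rw [hL.limUnder_eq, hL'.limUnder_eq]
    have h1 : Tendsto (fun n : ℕ => shiftCocycleInv B (n+1) x ∘L shiftCocycle A (n+1) y)
        atTop (nhds L) := hL.comp (tendsto_add_atTop_nat 1)
    have h2 : (fun n : ℕ => shiftCocycleInv B (n+1) x ∘L shiftCocycle A (n+1) y)
        = fun n : ℕ => B x * ((shiftCocycleInv B n (shiftMap x)
            ∘L shiftCocycle A n (shiftMap y)) * A y) := by
      funext n
      show (B x ∘L shiftCocycleInv B n (shiftMap x))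
          ∘L (shiftCocycle A n (shiftMap y) ∘L A y) = _
      simp only [← ContinuousLinearMap.mul_def]
      noncomm_ring
    have h3 : Tendsto (fun n : ℕ => B x * ((shiftCocycleInv B n (shiftMap x)
          ∘L shiftCocycle A n (shiftMap y)) * A y)) atTop (nhds (B x * (L' * A y))) := by
      have hcont : Continuous (fun M : EuclideanSpace ℝ (Fin k) →L[ℝ] EuclideanSpace ℝ (Fin k)
          => B x * (M * A y)) := continuous_const.mul (continuous_id.mul continuous_const)
      exact (hcont.tendsto L').comp hL'
    have h4 : L = B x * (L' * A y) := tendsto_nhds_unique (h2 ▸ h1) h3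
    have hAB : A x * B x = 1 := by
      rw [ContinuousLinearMap.mul_def]; exact (hB x hx).1
    simp only [← ContinuousLinearMap.mul_def]
    rw [h4, ← mul_assoc, hAB, one_mul]
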